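/- Let P_e be a probability distribution on X × X with all entries strictly positive that is a product distribution, i.e., P_e(x,y) = P_i(x)·P_j(y). Let Π_e be the r²×r² diagonal matrix with entries 1/P_e(x,y), and let H_e be the Hessian of the mutual information functional I(vec(Q)) evaluated at Q = P_e. Then the matrix I - Π_e^{-1/2} H_e Π_e^{-1/2} is positive semidefinite with eigenvalue 0, so the maximum eigenvalue of Π_e^{-1/2} H_e Π_e^{-1/2} equals 1, and hence max{μ ≥ 0 : Π_e ⪰ μ·H_e} = 1. -/

import Mathlib

open Finset

/-- Mutual information of a joint distribution `Q` on `X × X`, viewed as a function of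
the vector of entries `vec(Q) ∈ ℝ^{r²}`. -/
noncomputable def mutInfo {r : ℕ} (Q : Fin r × Fin r → ℝ) : ℝ :=
  ∑ z : Fin r × Fin r,
    Q z * Real.log (Q z / ((∑ y : Fin r, Q (z.1, y)) * (∑ x : Fin r, Q (x, z.2))))

/-- The Hessian matrix of the mutual information functional at `P`, with entries the
second partial derivatives of `mutInfo` in the coordinate directions. -/
noncomputable def miHessian {r : ℕ} (P : Fin r × Fin r → ℝ) :
    Matrix (Fin r × Fin r) (Fin r × Fin r) ℝ :=
  fun a b =>
    fderiv ℝ (fun Q : Fin r × Fin r → ℝ =>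
      fderiv ℝ mutInfo Q (Pi.single b 1)) P (Pi.single a 1)

/-! ### Auxiliary calculus lemmas -/

section Aux

open Filter Real

variable {r : ℕ}

lemma eventually_pos' {P : Fin r × Fin r → ℝ} (hP : ∀ z, 0 < P z) :
    ∀ᶠ Q in nhds P, ∀ z, 0 < Q z := by
  rw [Filter.eventually_all]
  intro z
  exact ContinuousAt.eventually_lt continuousAt_const (continuous_apply z).continuousAt (hP z)

noncomputable def rowL (x : Fin r) : (Fin r × Fin r → ℝ) →L[ℝ] ℝ :=
  ∑ y, ContinuousLinearMap.proj (x, y)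

noncomputable def colL (y : Fin r) : (Fin r × Fin r → ℝ) →L[ℝ] ℝ :=
  ∑ x, ContinuousLinearMap.proj (x, y)

noncomputable def mDeriv (Q : Fin r × Fin r → ℝ) : (Fin r × Fin r → ℝ) →L[ℝ] ℝ :=
  ∑ z : Fin r × Fin r,
    (Q z • (((Q z)⁻¹ • (ContinuousLinearMap.proj z : (Fin r × Fin r → ℝ) →L[ℝ] ℝ)
        - (∑ y, Q (z.1, y))⁻¹ • rowL z.1) - (∑ x, Q (x, z.2))⁻¹ • colL z.2)
      + (Real.log (Q z) - Real.log (∑ y, Q (z.1, y)) - Real.log (∑ x, Q (x, z.2))) •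
        (ContinuousLinearMap.proj z : (Fin r × Fin r → ℝ) →L[ℝ] ℝ))

lemma hasFDerivAt_F (hr : 0 < r) {Q : Fin r × Fin r → ℝ} (hQ : ∀ z, 0 < Q z) :
    HasFDerivAt (fun Q : Fin r × Fin r → ℝ => ∑ z : Fin r × Fin r,
      Q z * (Real.log (Q z) - Real.log (∑ y, Q (z.1, y)) - Real.log (∑ x, Q (x, z.2))))
      (mDeriv Q) Q := by
  have : Nonempty (Fin r) := ⟨⟨0, hr⟩⟩
  have hR : ∀ x, 0 < ∑ y, Q (x, y) := fun x => Finset.sum_pos (fun y _ => hQ _) univ_nonempty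
  have hC : ∀ y, 0 < ∑ x, Q (x, y) := fun y => Finset.sum_pos (fun x _ => hQ _) univ_nonempty
  apply HasFDerivAt.fun_sum
  intro z _
  have h1 : HasFDerivAt (fun Q : Fin r × Fin r → ℝ => Q z)
      (ContinuousLinearMap.proj z : (Fin r × Fin r → ℝ) →L[ℝ] ℝ) Q := by
    exact hasFDerivAt_apply z Q
  have hrow : HasFDerivAt (fun Q : Fin r × Fin r → ℝ => ∑ y, Q (z.1, y)) (rowL z.1) Q :=
    by exact HasFDerivAt.fun_sum fun y _ => hasFDerivAt_apply (z.1, y) Q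
  have hcol : HasFDerivAt (fun Q : Fin r × Fin r → ℝ => ∑ x, Q (x, z.2)) (colL z.2) Q :=
    by exact HasFDerivAt.fun_sum fun x _ => hasFDerivAt_apply (x, z.2) Q
  exact h1.mul (((h1.log (hQ z).ne').sub (hrow.log (hR z.1).ne')).sub (hcol.log (hC z.2).ne'))

lemma fderiv_mutInfo (hr : 0 < r) {Q : Fin r × Fin r → ℝ} (hQ : ∀ z, 0 < Q z) :
    fderiv ℝ mutInfo Q = mDeriv Q := by
  have : Nonempty (Fin r) := ⟨⟨0, hr⟩⟩
  have hF := hasFDerivAt_F hr hQ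
  have heq : mutInfo =ᶠ[nhds Q] (fun Q : Fin r × Fin r → ℝ => ∑ z : Fin r × Fin r,
      Q z * (Real.log (Q z) - Real.log (∑ y, Q (z.1, y)) - Real.log (∑ x, Q (x, z.2)))) := by
    filter_upwards [eventually_pos' hQ] with Q' hQ'
    have hR : ∀ x, 0 < ∑ y, Q' (x, y) := fun x => Finset.sum_pos (fun y _ => hQ' _) univ_nonempty
    have hC : ∀ y, 0 < ∑ x, Q' (x, y) := fun y => Finset.sum_pos (fun x _ => hQ' _) univ_nonempty
    unfold mutInfo
    refine Finset.sum_congr rfl fun z _ => ?_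
    rw [Real.log_div (hQ' z).ne' (mul_pos (hR z.1) (hC z.2)).ne',
      Real.log_mul (hR z.1).ne' (hC z.2).ne', sub_add_eq_sub_sub]
  exact (hF.congr_of_eventuallyEq heq).fderiv

lemma mDeriv_single (hr : 0 < r) {Q : Fin r × Fin r → ℝ} (hQ : ∀ z, 0 < Q z)
    (b : Fin r × Fin r) :
    mDeriv Q (Pi.single b 1) =
      Real.log (Q b) - Real.log (∑ y, Q (b.1, y)) - Real.log (∑ x, Q (x, b.2)) - 1 := by
  have : Nonempty (Fin r) := ⟨⟨0, hr⟩⟩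
  have hR : ∀ x, 0 < ∑ y, Q (x, y) := fun x => Finset.sum_pos (fun y _ => hQ _) univ_nonempty
  have hC : ∀ y, 0 < ∑ x, Q (x, y) := fun y => Finset.sum_pos (fun x _ => hQ _) univ_nonempty
  have hrow' : ∀ x : Fin r, (∑ y, if ((x, y) : Fin r × Fin r) = b then (1:ℝ) else 0)
      = if x = b.1 then 1 else 0 := by
    intro x; simp [Prod.ext_iff, ite_and]
  have hcol' : ∀ y : Fin r, (∑ x, if ((x, y) : Fin r × Fin r) = b then (1:ℝ) else 0)
      = if y = b.2 then 1 else 0 := by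
    intro y; simp [Prod.ext_iff, ite_and]
  simp only [mDeriv, rowL, colL, ContinuousLinearMap.sum_apply, ContinuousLinearMap.add_apply,
    ContinuousLinearMap.smul_apply, ContinuousLinearMap.sub_apply, ContinuousLinearMap.proj_apply,
    smul_eq_mul]
  simp only [Pi.single_apply, hrow', hcol', mul_sub, mul_ite, mul_one, mul_zero]
  rw [Finset.sum_add_distrib, Finset.sum_ite_eq' univ b, Finset.sum_sub_distrib,
    Finset.sum_sub_distrib, Finset.sum_ite_eq' univ b]
  simp only [mem_univ, if_true, mul_inv_cancel₀ (hQ b).ne']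
  rw [Fintype.sum_prod_type, Fintype.sum_prod_type]
  have h1 : ∀ x : Fin r, (∑ y, if x = b.1 then Q (x, y) * (∑ y', Q (x, y'))⁻¹ else 0)
      = if x = b.1 then 1 else 0 := by
    intro x
    split
    · rw [← Finset.sum_mul, mul_inv_cancel₀ (hR x).ne']
    · simp
  have h2 : ∀ x : Fin r, (∑ y, if y = b.2 then Q (x, y) * (∑ x', Q (x', y))⁻¹ else 0)
      = Q (x, b.2) * (∑ x', Q (x', b.2))⁻¹ := by
    intro x
    rw [Finset.sum_ite_eq' univ b.2]
    simp
  simp only [h1, h2]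
  rw [Finset.sum_ite_eq' univ b.1, ← Finset.sum_mul, mul_inv_cancel₀ (hC b.2).ne']
  simp
  ring

lemma miHessian_eq (hr : 0 < r) {P : Fin r × Fin r → ℝ} (hP : ∀ z, 0 < P z)
    (a b : Fin r × Fin r) :
    miHessian P a b = (if b = a then (P b)⁻¹ else 0)
      - (if b.1 = a.1 then (∑ y, P (b.1, y))⁻¹ else 0)
      - (if b.2 = a.2 then (∑ x, P (x, b.2))⁻¹ else 0) := by
  have : Nonempty (Fin r) := ⟨⟨0, hr⟩⟩
  have hR : ∀ x, 0 < ∑ y, P (x, y) := fun x => Finset.sum_pos (fun y _ => hP _) univ_nonempty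
  have hC : ∀ y, 0 < ∑ x, P (x, y) := fun y => Finset.sum_pos (fun x _ => hP _) univ_nonempty
  have heq : (fun Q : Fin r × Fin r → ℝ => fderiv ℝ mutInfo Q (Pi.single b 1)) =ᶠ[nhds P]
      (fun Q : Fin r × Fin r → ℝ =>
        Real.log (Q b) - Real.log (∑ y, Q (b.1, y)) - Real.log (∑ x, Q (x, b.2)) - 1) := by
    filter_upwards [eventually_pos' hP] with Q' hQ'
    rw [fderiv_mutInfo hr hQ', mDeriv_single hr hQ' b]
  have hG : HasFDerivAt (fun Q : Fin r × Fin r → ℝ =>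
        Real.log (Q b) - Real.log (∑ y, Q (b.1, y)) - Real.log (∑ x, Q (x, b.2)) - 1)
      (((P b)⁻¹ • (ContinuousLinearMap.proj b : (Fin r × Fin r → ℝ) →L[ℝ] ℝ)
        - (∑ y, P (b.1, y))⁻¹ • rowL b.1) - (∑ x, P (x, b.2))⁻¹ • colL b.2) P := by
    have h1 : HasFDerivAt (fun Q : Fin r × Fin r → ℝ => Q b)
        (ContinuousLinearMap.proj b : (Fin r × Fin r → ℝ) →L[ℝ] ℝ) P := by
      exact hasFDerivAt_apply b P
    have hrow : HasFDerivAt (fun Q : Fin r × Fin r → ℝ => ∑ y, Q (b.1, y)) (rowL b.1) P :=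
      by exact HasFDerivAt.fun_sum fun y _ => hasFDerivAt_apply (b.1, y) P
    have hcol : HasFDerivAt (fun Q : Fin r × Fin r → ℝ => ∑ x, Q (x, b.2)) (colL b.2) P :=
      by exact HasFDerivAt.fun_sum fun x _ => hasFDerivAt_apply (x, b.2) P
    exact (((h1.log (hP b).ne').sub (hrow.log (hR b.1).ne')).sub
      (hcol.log (hC b.2).ne')).sub_const 1
  have hrow' : ∀ x : Fin r, (∑ y, if ((x, y) : Fin r × Fin r) = a then (1:ℝ) else 0)
      = if x = a.1 then 1 else 0 := by
    intro x; simp [Prod.ext_iff, ite_and]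
  have hcol' : ∀ y : Fin r, (∑ x, if ((x, y) : Fin r × Fin r) = a then (1:ℝ) else 0)
      = if y = a.2 then 1 else 0 := by
    intro y; simp [Prod.ext_iff, ite_and]
  rw [miHessian, heq.fderiv_eq, hG.fderiv]
  simp only [rowL, colL, ContinuousLinearMap.sum_apply, ContinuousLinearMap.smul_apply,
    ContinuousLinearMap.sub_apply, ContinuousLinearMap.proj_apply, smul_eq_mul,
    Pi.single_apply, hrow' b.1, hcol' b.2, mul_ite, mul_one, mul_zero]

/-! ### Auxiliary algebraic lemmas -/

lemma quadA (w : Fin r → ℝ) (x : Fin r × Fin r → ℝ) :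
    ∑ a : Fin r × Fin r, x a *
      (∑ b : Fin r × Fin r, (if b.1 = a.1 then w a.2 * w b.2 else 0) * x b)
    = ∑ t : Fin r, (∑ y, w y * x (t, y))^2 := by
  rw [Fintype.sum_prod_type]
  refine Finset.sum_congr rfl fun t _ => ?_
  rw [sq]
  rw [show ∀ c : ℝ, (∑ y, w y * x (t, y)) * c = ∑ y, (x (t,y) * (w y * c)) from
    fun c => by rw [Finset.sum_mul]; exact Finset.sum_congr rfl fun y _ => by ring]
  refine Finset.sum_congr rfl fun a2 _ => ?_
  congr 1
  rw [Fintype.sum_prod_type]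
  simp only [ite_mul, zero_mul, Finset.sum_ite_irrel, Finset.sum_const_zero,
    Finset.sum_ite_eq' univ t]
  simp only [mem_univ, if_true, Finset.mul_sum]
  exact Finset.sum_congr rfl fun y _ => by ring

lemma quadB (v : Fin r → ℝ) (x : Fin r × Fin r → ℝ) :
    ∑ a : Fin r × Fin r, x a *
      (∑ b : Fin r × Fin r, (if b.2 = a.2 then v a.1 * v b.1 else 0) * x b)
    = ∑ t : Fin r, (∑ s, v s * x (s, t))^2 := by
  rw [Fintype.sum_prod_type, Finset.sum_comm]
  refine Finset.sum_congr rfl fun t _ => ?_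
  rw [sq]
  rw [show ∀ c : ℝ, (∑ s, v s * x (s, t)) * c = ∑ s, (x (s,t) * (v s * c)) from
    fun c => by rw [Finset.sum_mul]; exact Finset.sum_congr rfl fun s _ => by ring]
  refine Finset.sum_congr rfl fun a1 _ => ?_
  congr 1
  rw [Fintype.sum_prod_type, Finset.sum_comm]
  simp only [ite_mul, zero_mul, Finset.sum_ite_irrel, Finset.sum_const_zero,
    Finset.sum_ite_eq' univ t]
  simp only [mem_univ, if_true, Finset.mul_sum]
  exact Finset.sum_congr rfl fun s _ => by ring

lemma eigSum (v w c d : Fin r → ℝ) (hc : ∑ s, v s * c s = 0) (hd : ∑ y, w y * d y = 0)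
    (a : Fin r × Fin r) :
    ∑ b : Fin r × Fin r, ((if b = a then (1:ℝ) else 0)
      - (if b.1 = a.1 then w a.2 * w b.2 else 0)
      - (if b.2 = a.2 then v a.1 * v b.1 else 0)) * (c b.1 * d b.2)
    = c a.1 * d a.2 := by
  simp only [sub_mul, ite_mul, zero_mul, one_mul]
  rw [Finset.sum_sub_distrib, Finset.sum_sub_distrib, Finset.sum_ite_eq' univ a]
  have h2 : ∑ b : Fin r × Fin r,
      (if b.1 = a.1 then w a.2 * w b.2 * (c b.1 * d b.2) else 0) = 0 := by
    rw [Fintype.sum_prod_type]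
    simp only [Finset.sum_ite_irrel, Finset.sum_const_zero, Finset.sum_ite_eq' univ a.1,
      mem_univ, if_true]
    rw [show ∑ b2, w a.2 * w b2 * (c a.1 * d b2)
        = (w a.2 * c a.1) * ∑ b2, w b2 * d b2 from by
      rw [Finset.mul_sum]; exact Finset.sum_congr rfl fun y _ => by ring]
    rw [hd, mul_zero]
  have h3 : ∑ b : Fin r × Fin r,
      (if b.2 = a.2 then v a.1 * v b.1 * (c b.1 * d b.2) else 0) = 0 := by
    rw [Fintype.sum_prod_type, Finset.sum_comm]
    simp only [Finset.sum_ite_irrel, Finset.sum_const_zero, Finset.sum_ite_eq' univ a.2,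
      mem_univ, if_true]
    rw [show ∑ b1, v a.1 * v b1 * (c b1 * d a.2)
        = (v a.1 * d a.2) * ∑ b1, v b1 * c b1 from by
      rw [Finset.mul_sum]; exact Finset.sum_congr rfl fun s _ => by ring]
    rw [hc, mul_zero]
  rw [h2, h3]
  simp

lemma sab_aux (Pi' Pj : Fin r → ℝ) (hPi : ∀ x, 0 < Pi' x) (hPj : ∀ y, 0 < Pj y)
    (Pe : Fin r × Fin r → ℝ) (hPe : ∀ z, Pe z = Pi' z.1 * Pj z.2)
    (hPepos : ∀ z, 0 < Pe z)
    (a b : Fin r × Fin r)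
    (H : Matrix (Fin r × Fin r) (Fin r × Fin r) ℝ)
    (hH : H a b = (if b = a then (Pe b)⁻¹ else 0)
      - (if b.1 = a.1 then (Pi' b.1)⁻¹ else 0)
      - (if b.2 = a.2 then (Pj b.2)⁻¹ else 0)) :
    ((Matrix.diagonal fun z => Real.sqrt (Pe z)) * H *
      (Matrix.diagonal fun z => Real.sqrt (Pe z))) a b
    = (if b = a then (1:ℝ) else 0)
      - (if b.1 = a.1 then Real.sqrt (Pj a.2) * Real.sqrt (Pj b.2) else 0)
      - (if b.2 = a.2 then Real.sqrt (Pi' a.1) * Real.sqrt (Pi' b.1) else 0) := by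
  rw [Matrix.mul_diagonal, Matrix.diagonal_mul, hH]
  rw [show ∀ p x y z q : ℝ, p * (x - y - z) * q = p*x*q - p*y*q - p*z*q from
    fun p x y z q => by ring]
  simp only [mul_ite, ite_mul, mul_zero, zero_mul]
  have hT1 : (if b = a then Real.sqrt (Pe a) * (Pe b)⁻¹ * Real.sqrt (Pe b) else 0)
      = (if b = a then (1:ℝ) else 0) := by
    split
    · next h =>
      subst h
      rw [show Real.sqrt (Pe b) * (Pe b)⁻¹ * Real.sqrt (Pe b)
          = (Real.sqrt (Pe b) * Real.sqrt (Pe b)) * (Pe b)⁻¹ from by ring,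
        Real.mul_self_sqrt (hPepos b).le, mul_inv_cancel₀ (hPepos b).ne']
    · rfl
  have hT2 : (if b.1 = a.1 then Real.sqrt (Pe a) * (Pi' b.1)⁻¹ * Real.sqrt (Pe b) else 0)
      = (if b.1 = a.1 then Real.sqrt (Pj a.2) * Real.sqrt (Pj b.2) else 0) := by
    split
    · next h =>
      rw [hPe a, hPe b, ← h, Real.sqrt_mul (hPi _).le, Real.sqrt_mul (hPi _).le,
        show Real.sqrt (Pi' b.1) * Real.sqrt (Pj a.2) * (Pi' b.1)⁻¹ *
            (Real.sqrt (Pi' b.1) * Real.sqrt (Pj b.2))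
          = (Real.sqrt (Pi' b.1) * Real.sqrt (Pi' b.1)) * (Pi' b.1)⁻¹ *
            (Real.sqrt (Pj a.2) * Real.sqrt (Pj b.2)) from by ring,
        Real.mul_self_sqrt (hPi _).le, mul_inv_cancel₀ (hPi _).ne', one_mul]
    · rfl
  have hT3 : (if b.2 = a.2 then Real.sqrt (Pe a) * (Pj b.2)⁻¹ * Real.sqrt (Pe b) else 0)
      = (if b.2 = a.2 then Real.sqrt (Pi' a.1) * Real.sqrt (Pi' b.1) else 0) := by
    split
    · next h =>
      rw [hPe a, hPe b, ← h, Real.sqrt_mul (hPi _).le, Real.sqrt_mul (hPi _).le,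
        show Real.sqrt (Pi' a.1) * Real.sqrt (Pj b.2) * (Pj b.2)⁻¹ *
            (Real.sqrt (Pi' b.1) * Real.sqrt (Pj b.2))
          = (Real.sqrt (Pj b.2) * Real.sqrt (Pj b.2)) * (Pj b.2)⁻¹ *
            (Real.sqrt (Pi' a.1) * Real.sqrt (Pi' b.1)) from by ring,
        Real.mul_self_sqrt (hPj _).le, mul_inv_cancel₀ (hPj _).ne', one_mul]
    · rfl
  rw [hT1, hT2, hT3]

end Aux

/-- For a product distribution `P_e` with positive entries, with `Π_e = diag(1/P_e)` and
`H_e` the Hessian of mutual information at `P_e`, the matrix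
`I - Π_e^{-1/2} H_e Π_e^{-1/2}` is positive semidefinite with eigenvalue `0`; hence the
maximum eigenvalue of `Π_e^{-1/2} H_e Π_e^{-1/2}` equals `1`, and
`max{μ ≥ 0 : Π_e ⪰ μ·H_e} = 1`. -/
theorem hessian_sdp_optimal_value (r : ℕ) (hr : 2 ≤ r)
    (Pi' Pj : Fin r → ℝ)
    (hPi : ∀ x, 0 < Pi' x) (hPisum : ∑ x, Pi' x = 1)
    (hPj : ∀ y, 0 < Pj y) (hPjsum : ∑ y, Pj y = 1)
    (Pe : Fin r × Fin r → ℝ) (hPe : ∀ z, Pe z = Pi' z.1 * Pj z.2)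
    (PiMat : Matrix (Fin r × Fin r) (Fin r × Fin r) ℝ)
    (hPiMat : PiMat = Matrix.diagonal fun z => 1 / Pe z)
    (S : Matrix (Fin r × Fin r) (Fin r × Fin r) ℝ)
    (hS : S = (Matrix.diagonal fun z => Real.sqrt (Pe z)) * miHessian Pe *
      (Matrix.diagonal fun z => Real.sqrt (Pe z))) :
    ((1 : Matrix (Fin r × Fin r) (Fin r × Fin r) ℝ) - S).PosSemidef ∧
    (∃ v : Fin r × Fin r → ℝ, v ≠ 0 ∧ S.mulVec v = (1 : ℝ) • v) ∧
    IsGreatest {μ : ℝ | ∃ v : Fin r × Fin r → ℝ, v ≠ 0 ∧ S.mulVec v = μ • v} 1 ∧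
    IsGreatest {μ : ℝ | 0 ≤ μ ∧ (PiMat - μ • miHessian Pe).PosSemidef} 1 := by
  have hr0 : 0 < r := by omega
  have hPepos : ∀ z, 0 < Pe z := fun z => by rw [hPe]; exact mul_pos (hPi _) (hPj _)
  set v : Fin r → ℝ := fun s => Real.sqrt (Pi' s) with hv
  set w : Fin r → ℝ := fun y => Real.sqrt (Pj y) with hw
  have hvpos : ∀ s, 0 < v s := fun s => Real.sqrt_pos.mpr (hPi s)
  have hwpos : ∀ s, 0 < w s := fun s => Real.sqrt_pos.mpr (hPj s)
  have hRow : ∀ x, (∑ y, Pe (x, y)) = Pi' x := by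
    intro x
    simp only [hPe]
    rw [← Finset.mul_sum, hPjsum, mul_one]
  have hCol : ∀ y, (∑ x, Pe (x, y)) = Pj y := by
    intro y
    simp only [hPe]
    rw [← Finset.sum_mul, hPisum, one_mul]
  have hH : ∀ a b, miHessian Pe a b = (if b = a then (Pe b)⁻¹ else 0)
      - (if b.1 = a.1 then (Pi' b.1)⁻¹ else 0)
      - (if b.2 = a.2 then (Pj b.2)⁻¹ else 0) := by
    intro a b
    rw [miHessian_eq hr0 hPepos a b, hRow, hCol]
  have hSab : ∀ a b, S a b = (if b = a then (1:ℝ) else 0)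
      - (if b.1 = a.1 then w a.2 * w b.2 else 0)
      - (if b.2 = a.2 then v a.1 * v b.1 else 0) := by
    intro a b
    rw [hS]
    exact sab_aux Pi' Pj hPi hPj Pe hPe hPepos a b _ (hH a b)
  -- the entries of 1 - S
  have hM : ∀ a b, ((1 : Matrix (Fin r × Fin r) (Fin r × Fin r) ℝ) - S) a b
      = (if b.1 = a.1 then w a.2 * w b.2 else 0) + (if b.2 = a.2 then v a.1 * v b.1 else 0) := by
    intro a b
    rw [Matrix.sub_apply, Matrix.one_apply, hSab,
      show (if a = b then (1:ℝ) else 0) = (if b = a then 1 else 0) from by simp [eq_comm]]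
    ring
  -- part 1: PosSemidef (1 - S)
  have hquad : ∀ x : Fin r × Fin r → ℝ,
      dotProduct x (((1 : Matrix (Fin r × Fin r) (Fin r × Fin r) ℝ) - S).mulVec x)
      = (∑ t : Fin r, (∑ y, w y * x (t, y))^2) + (∑ t : Fin r, (∑ s, v s * x (s, t))^2) := by
    intro x
    simp only [Matrix.mulVec, dotProduct, hM, add_mul, Finset.sum_add_distrib, mul_add]
    rw [quadA, quadB]
  have hpsd1 : ((1 : Matrix (Fin r × Fin r) (Fin r × Fin r) ℝ) - S).PosSemidef := by
    refine Matrix.posSemidef_iff_dotProduct_mulVec.mpr ⟨?_, ?_⟩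
    · show _ = _
      ext a b
      rw [Matrix.conjTranspose_apply]
      show star ((1 - S) b a) = (1 - S) a b
      rw [star_trivial, hM, hM]
      congr 1
      · exact if_congr eq_comm (mul_comm _ _) rfl
      · exact if_congr eq_comm (mul_comm _ _) rfl
    · intro x
      rw [show star x = x from rfl, hquad]
      have t1 : (0:ℝ) ≤ ∑ t : Fin r, (∑ y, w y * x (t, y))^2 :=
        Finset.sum_nonneg fun t _ => sq_nonneg _
      have t2 : (0:ℝ) ≤ ∑ t : Fin r, (∑ s, v s * x (s, t))^2 :=
        Finset.sum_nonneg fun t _ => sq_nonneg _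
      positivity
  -- eigenvector with eigenvalue 1
  set i0 : Fin r := ⟨0, by omega⟩ with hi0
  set i1 : Fin r := ⟨1, by omega⟩ with hi1
  have h01 : i0 ≠ i1 := by simp [hi0, hi1, Fin.ext_iff]
  set c : Fin r → ℝ := fun s => (if s = i0 then v i1 else 0) - (if s = i1 then v i0 else 0)
    with hc
  set d : Fin r → ℝ := fun s => (if s = i0 then w i1 else 0) - (if s = i1 then w i0 else 0)
    with hd
  have hvc : ∑ s, v s * c s = 0 := by
    simp only [hc, mul_sub, mul_ite, mul_zero, Finset.sum_sub_distrib,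
      Finset.sum_ite_eq' univ i0, Finset.sum_ite_eq' univ i1, mem_univ, if_true]
    ring
  have hwd : ∑ s, w s * d s = 0 := by
    simp only [hd, mul_sub, mul_ite, mul_zero, Finset.sum_sub_distrib,
      Finset.sum_ite_eq' univ i0, Finset.sum_ite_eq' univ i1, mem_univ, if_true]
    ring
  set u : Fin r × Fin r → ℝ := fun a => c a.1 * d a.2 with hu
  have hci0 : c i0 = v i1 := by simp [hc, h01.symm, h01]
  have hdi0 : d i0 = w i1 := by simp [hd, h01.symm, h01]
  have hu0 : u ≠ 0 := by
    intro h
    have h2 : c i0 * d i0 = 0 := congrFun h (i0, i0)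
    rw [hci0, hdi0] at h2
    exact (mul_pos (hvpos i1) (hwpos i1)).ne' h2
  have hSu : S.mulVec u = u := by
    funext a
    show ∑ b, S a b * u b = u a
    calc ∑ b, S a b * u b
        = ∑ b : Fin r × Fin r, ((if b = a then (1:ℝ) else 0)
            - (if b.1 = a.1 then w a.2 * w b.2 else 0)
            - (if b.2 = a.2 then v a.1 * v b.1 else 0)) * (c b.1 * d b.2) :=
          Finset.sum_congr rfl fun b _ => by rw [hSab]
      _ = c a.1 * d a.2 := eigSum v w c d hvc hwd a
      _ = u a := rfl
  have hdotu : 0 < dotProduct u u := by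
    rcases (Finset.sum_nonneg fun b _ => mul_self_nonneg (u b)).lt_or_eq with h | h
    · exact h
    · exact absurd (dotProduct_self_eq_zero.mp h.symm) hu0
  -- upper bound for eigenvalues
  have hub : ∀ μ : ℝ, (∃ x : Fin r × Fin r → ℝ, x ≠ 0 ∧ S.mulVec x = μ • x) → μ ≤ 1 := by
    rintro μ ⟨x, hx0, hx⟩
    have h0 := hpsd1.dotProduct_mulVec_nonneg x
    rw [show star x = x from rfl, Matrix.sub_mulVec, Matrix.one_mulVec, dotProduct_sub,
      hx, dotProduct_smul] at h0
    have hdx : 0 < dotProduct x x := by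
      rcases (Finset.sum_nonneg fun b _ => mul_self_nonneg (x b)).lt_or_eq with h | h
      · exact h
      · exact absurd (dotProduct_self_eq_zero.mp h.symm) hx0
    rw [smul_eq_mul] at h0
    nlinarith
  refine ⟨hpsd1, ⟨u, hu0, by rw [one_smul]; exact hSu⟩,
    ⟨⟨u, hu0, by rw [one_smul]; exact hSu⟩, hub⟩, ?_⟩
  -- part 4
  set D : Matrix (Fin r × Fin r) (Fin r × Fin r) ℝ :=
    Matrix.diagonal fun z => Real.sqrt (Pe z) with hD
  set E : Matrix (Fin r × Fin r) (Fin r × Fin r) ℝ :=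
    Matrix.diagonal fun z => (Real.sqrt (Pe z))⁻¹ with hE
  have hsqrtne : ∀ z : Fin r × Fin r, Real.sqrt (Pe z) ≠ 0 :=
    fun z => (Real.sqrt_pos.mpr (hPepos z)).ne'
  have hDE : D * E = 1 := by
    rw [hD, hE, Matrix.diagonal_mul_diagonal]
    rw [show (fun z : Fin r × Fin r => Real.sqrt (Pe z) * (Real.sqrt (Pe z))⁻¹)
        = fun _ => (1:ℝ) from funext fun z => mul_inv_cancel₀ (hsqrtne z)]
    exact Matrix.diagonal_one
  have hED : E * D = 1 := by
    rw [hD, hE, Matrix.diagonal_mul_diagonal]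
    rw [show (fun z : Fin r × Fin r => (Real.sqrt (Pe z))⁻¹ * Real.sqrt (Pe z))
        = fun _ => (1:ℝ) from funext fun z => inv_mul_cancel₀ (hsqrtne z)]
    exact Matrix.diagonal_one
  have hEE : E * E = PiMat := by
    rw [hE, hPiMat, Matrix.diagonal_mul_diagonal,
      show (fun z : Fin r × Fin r => (Real.sqrt (Pe z))⁻¹ * (Real.sqrt (Pe z))⁻¹)
        = fun z : Fin r × Fin r => 1 / Pe z from funext fun z => by
        rw [← mul_inv, Real.mul_self_sqrt (hPepos z).le, one_div]]
  have hESE : E * S * E = miHessian Pe := by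
    rw [hS]
    show E * (D * miHessian Pe * D) * E = miHessian Pe
    simp only [mul_assoc]
    rw [hDE, mul_one, ← mul_assoc E D, hED, one_mul]
  have hident : ∀ μ : ℝ, E * ((1 : Matrix (Fin r × Fin r) (Fin r × Fin r) ℝ) - μ • S) * E
      = PiMat - μ • miHessian Pe := by
    intro μ
    rw [mul_sub, mul_one, sub_mul, hEE]
    congr 1
    rw [mul_smul_comm, smul_mul_assoc, hESE]
  have hEherm : Matrix.conjTranspose E = E := by
    rw [hE, Matrix.diagonal_conjTranspose]
    rfl
  have hDherm : Matrix.conjTranspose D = D := by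
    rw [hD, Matrix.diagonal_conjTranspose]
    rfl
  have hDSD : ∀ μ : ℝ, D * (PiMat - μ • miHessian Pe) * D
      = (1 : Matrix (Fin r × Fin r) (Fin r × Fin r) ℝ) - μ • S := by
    intro μ
    rw [← hident μ, ← mul_assoc D (E * (1 - μ • S)) E,
      ← mul_assoc D E (1 - μ • S), hDE, one_mul,
      mul_assoc (1 - μ • S) E D, hED, mul_one]
  constructor
  · refine ⟨zero_le_one, ?_⟩
    have h1S : ((1 : Matrix (Fin r × Fin r) (Fin r × Fin r) ℝ) - (1:ℝ) • S).PosSemidef := by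
      rw [one_smul]; exact hpsd1
    have hx := h1S.conjTranspose_mul_mul_same E
    rw [hEherm, hident 1] at hx
    exact hx
  · rintro μ ⟨hμ0, hpsd⟩
    have hx := hpsd.conjTranspose_mul_mul_same D
    rw [hDherm, hDSD μ] at hx
    have h0 := hx.dotProduct_mulVec_nonneg u
    rw [show star u = u from rfl, Matrix.sub_mulVec, Matrix.one_mulVec,
      Matrix.smul_mulVec, hSu, dotProduct_sub, dotProduct_smul,
      smul_eq_mul] at h0
    nlinarith [hdotu]
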